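/- Let p be a prime and n a natural number. The number of p-regular partitions of n (partitions with no part repeated p or more times) equals the number of partitions of n into parts not divisible by p. -/

import Mathlib

open PowerSeries Finset
open scoped Classical

noncomputable section GlaisherAux

variable {α : Type*}

/-- A convenience constructor for the power series whose coefficients indicate a subset. -/
def indicatorSeries (α : Type*) [Semiring α] (s : Set ℕ) : PowerSeries α :=
  PowerSeries.mk fun n => if n ∈ s then 1 else 0

theorem coeff_indicator (s : Set ℕ) [Semiring α] (n : ℕ) :
    coeff n (indicatorSeries α s) = if n ∈ s then 1 else 0 :=
  coeff_mk _ _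

theorem constantCoeff_indicator (s : Set ℕ) [Semiring α] :
    constantCoeff (indicatorSeries α s) = if 0 ∈ s then 1 else 0 :=
  rfl

theorem num_series' [Field α] (i : ℕ) :
    (1 - (X : PowerSeries α) ^ (i + 1))⁻¹ = indicatorSeries α {k | i + 1 ∣ k} := by
  rw [PowerSeries.inv_eq_iff_mul_eq_one]
  · ext n
    cases n with
    | zero => simp [mul_sub, zero_pow, constantCoeff_indicator]
    | succ n =>
      simp only [coeff_one, if_false, mul_sub, mul_one, coeff_indicator,
        LinearMap.map_sub, reduceCtorEq]
      simp_rw [coeff_mul, coeff_X_pow, coeff_indicator, @boole_mul _ _ _ _]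
      erw [@sum_ite _ _ _ _ _ (fun _ => Classical.propDecidable _), sum_ite]
      simp_rw [@filter_filter _ _ _ _ _, sum_const_zero, add_zero, sum_const, nsmul_eq_mul, mul_one,
        sub_eq_iff_eq_add, zero_add]
      symm
      split_ifs with h
      · suffices #{a ∈ antidiagonal (n + 1) | i + 1 ∣ a.fst ∧ a.snd = i + 1} = 1 by
          simp only [Set.mem_setOf_eq]; convert congr_arg ((↑) : ℕ → α) this; norm_cast
        rw [card_eq_one]
        cases' h with p hp
        refine ⟨((i + 1) * (p - 1), i + 1), ?_⟩
        ext ⟨a₁, a₂⟩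
        simp only [mem_filter, Prod.mk_inj, HasAntidiagonal.mem_antidiagonal, mem_singleton]
        constructor
        · rintro ⟨a_left, ⟨a, rfl⟩, rfl⟩
          refine ⟨?_, rfl⟩
          rw [Nat.mul_sub_left_distrib, ← hp, ← a_left, mul_one, Nat.add_sub_cancel]
        · rintro ⟨rfl, rfl⟩
          match p with
          | 0 => rw [mul_zero] at hp; cases hp
          | p + 1 => rw [hp]; simp [mul_add]
      · suffices #{a ∈ antidiagonal (n + 1) | i + 1 ∣ a.fst ∧ a.snd = i + 1} = 0 by
          simp only [Set.mem_setOf_eq]; convert congr_arg ((↑) : ℕ → α) this; norm_cast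
        rw [card_eq_zero]
        apply eq_empty_of_forall_notMem
        simp only [Prod.forall, mem_filter, not_and, HasAntidiagonal.mem_antidiagonal]
        rintro _ h₁ h₂ ⟨a, rfl⟩ rfl
        apply h
        simp [← h₂]
  · simp [zero_pow]

-- The main workhorse of the partition theorem proof.
theorem partialGF_prop (α : Type*) [CommSemiring α] (n : ℕ) (s : Finset ℕ) (hs : ∀ i ∈ s, 0 < i)
    (c : ℕ → Set ℕ) (hc : ∀ i, i ∉ s → 0 ∈ c i) :
    #{p : n.Partition | (∀ j, p.parts.count j ∈ c j) ∧ ∀ j ∈ p.parts, j ∈ s} =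
      coeff n (∏ i ∈ s, indicatorSeries α ((· * i) '' c i)) := by
  simp_rw [coeff_prod, coeff_indicator, prod_boole, sum_boole]
  apply congr_arg
  simp only [mem_univ, forall_true_left, not_and, not_forall, exists_prop,
    Set.mem_image, not_exists]
  set φ : (a : Nat.Partition n) →
    a ∈ filter (fun p ↦ (∀ (j : ℕ), Multiset.count j p.parts ∈ c j) ∧ ∀ j ∈ p.parts, j ∈ s) univ →
    ℕ →₀ ℕ := fun p _ => {
      toFun := fun i => Multiset.count i p.parts • i
      support := Finset.filter (fun i => i ≠ 0) p.parts.toFinset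
      mem_support_toFun := fun a => by
        simp only [smul_eq_mul, ne_eq, mul_eq_zero, Multiset.count_eq_zero]
        rw [not_or, not_not]
        simp only [Multiset.mem_toFinset, not_not, mem_filter] }
  refine Finset.card_bij φ ?_ ?_ ?_
  · intro a ha
    simp only [φ, not_forall, not_exists, not_and, exists_prop, mem_filter]
    rw [mem_finsuppAntidiag]
    dsimp only [ne_eq, smul_eq_mul, id_eq, eq_mpr_eq_cast, le_eq_subset, Finsupp.coe_mk]
    simp only [mem_univ, forall_true_left, not_and, not_forall, exists_prop,
      mem_filter, true_and] at ha
    refine ⟨⟨?_, fun i ↦ ?_⟩, fun i _ ↦ ⟨a.parts.count i, ha.1 i, rfl⟩⟩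
    · conv_rhs => simp [← a.parts_sum]
      rw [sum_multiset_count_of_subset _ s]
      · simp only [smul_eq_mul]
      · intro i
        simp only [Multiset.mem_toFinset, not_not, mem_filter]
        apply ha.2
    · simp only [ne_eq, Multiset.mem_toFinset, not_not, mem_filter, and_imp]
      exact fun hi _ ↦ ha.2 i hi
  · intro p₁ hp₁ p₂ hp₂ h
    apply Nat.Partition.ext
    simp only [true_and, mem_univ, mem_filter] at hp₁ hp₂
    ext i
    simp only [φ, ne_eq, Multiset.mem_toFinset, not_not, smul_eq_mul, Finsupp.mk.injEq] at h
    by_cases hi : i = 0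
    · rw [hi]
      rw [Multiset.count_eq_zero_of_notMem]
      · rw [Multiset.count_eq_zero_of_notMem]
        intro a; exact Nat.lt_irrefl 0 (hs 0 (hp₂.2 0 a))
      intro a; exact Nat.lt_irrefl 0 (hs 0 (hp₁.2 0 a))
    · rw [← mul_left_inj' hi]
      rw [funext_iff] at h
      exact h.2 i
  · simp only [φ, mem_filter, mem_finsuppAntidiag, mem_univ, exists_prop, true_and, and_assoc]
    rintro f ⟨hf, hf₃, hf₄⟩
    have hf' : f ∈ finsuppAntidiag s n := mem_finsuppAntidiag.mpr ⟨hf, hf₃⟩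
    simp only [mem_finsuppAntidiag] at hf'
    refine ⟨⟨∑ i ∈ s, Multiset.replicate (f i / i) i, ?_, ?_⟩, ?_, ?_, ?_⟩
    · intro i hi
      simp only [exists_prop, Multiset.mem_sum, mem_map, Function.Embedding.coeFn_mk] at hi
      rcases hi with ⟨t, ht, z⟩
      apply hs
      rwa [Multiset.eq_of_mem_replicate z]
    · simp_rw [Multiset.sum_sum, Multiset.sum_replicate, Nat.nsmul_eq_mul]
      rw [← hf'.1]
      refine sum_congr rfl fun i hi => Nat.div_mul_cancel ?_
      rcases hf₄ i hi with ⟨w, _, hw₂⟩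
      rw [← hw₂]
      exact dvd_mul_left _ _
    · intro i
      simp_rw [Multiset.count_sum', Multiset.count_replicate, sum_ite_eq']
      split_ifs with h
      · rcases hf₄ i h with ⟨w, hw₁, hw₂⟩
        rwa [← hw₂, Nat.mul_div_cancel _ (hs i h)]
      · exact hc _ h
    · intro i hi
      rw [Multiset.mem_sum] at hi
      rcases hi with ⟨j, hj₁, hj₂⟩
      rwa [Multiset.eq_of_mem_replicate hj₂]
    · ext i
      simp_rw [Multiset.count_sum', Multiset.count_replicate, sum_ite_eq']
      simp only [ne_eq, Multiset.mem_toFinset, not_not, smul_eq_mul, ite_mul,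
        zero_mul, Finsupp.coe_mk]
      split_ifs with h
      · apply Nat.div_mul_cancel
        rcases hf₄ i h with ⟨w, _, hw₂⟩
        apply Dvd.intro_left _ hw₂
      · apply symm
        rw [← Finsupp.notMem_support_iff]
        exact notMem_mono hf'.2 h

end GlaisherAux


theorem num_series_dvd [Field α] {i : ℕ} (hi : 0 < i) :
    (1 - (X : PowerSeries α) ^ i)⁻¹ = indicatorSeries α {k | i ∣ k} := by
  obtain ⟨j, rfl⟩ := Nat.exists_eq_add_of_lt hi
  rw [zero_add, num_series']

theorem indicator_lt_eq [Field α] {i : ℕ} (hi : 0 < i) (p : ℕ) :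
    indicatorSeries α ((· * i) '' {k | k < p}) =
      (1 - (X : PowerSeries α) ^ (p * i)) * (1 - (X : PowerSeries α) ^ i)⁻¹ := by
  have hinv : (1 - (X : PowerSeries α) ^ i) * (1 - (X : PowerSeries α) ^ i)⁻¹ = 1 := by
    apply PowerSeries.mul_inv_cancel
    simp [zero_pow hi.ne']
  have hgeom : (∑ k ∈ range p, ((X : PowerSeries α) ^ i) ^ k) * (1 - (X : PowerSeries α) ^ i)
      = 1 - (X : PowerSeries α) ^ (p * i) := by
    have := geom_sum_mul ((X : PowerSeries α) ^ i) p
    have h2 : (∑ k ∈ range p, ((X : PowerSeries α) ^ i) ^ k) * (1 - (X : PowerSeries α) ^ i)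
        = -((((X : PowerSeries α) ^ i) ^ p) - 1) := by rw [← this]; ring
    rw [h2, ← pow_mul, mul_comm i p]; ring
  have hs : indicatorSeries α ((· * i) '' {k | k < p})
      = ∑ k ∈ range p, ((X : PowerSeries α) ^ i) ^ k := by
    ext m
    simp_rw [coeff_indicator, map_sum, ← pow_mul, coeff_X_pow]
    simp only [Set.mem_image, Set.mem_setOf_eq]
    by_cases h : ∃ k, k < p ∧ k * i = m
    · obtain ⟨k, hk, rfl⟩ := h
      rw [if_pos ⟨k, hk, rfl⟩, Finset.sum_eq_single k]
      · simp [mul_comm]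
      · intro b _ hbk
        rw [if_neg]
        intro he
        rw [mul_comm k i] at he
        exact hbk (Nat.eq_of_mul_eq_mul_left hi he).symm
      · intro hk'; exact absurd (mem_range.2 hk) hk'
    · rw [if_neg h]
      refine (Finset.sum_eq_zero fun b hb => ?_).symm
      rw [if_neg]
      intro he
      exact h ⟨b, mem_range.1 hb, by rw [he, mul_comm]⟩
  rw [hs, ← hgeom, mul_assoc, hinv, mul_one]

/-- Glaisher's theorem: the number of `p`-regular partitions of `n` (no part repeated `p` or
more times) equals the number of partitions of `n` into parts not divisible by `p`. -/
theorem stmt_18 (p : ℕ) (hp : p.Prime) (n : ℕ) :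
    Nat.card {P : n.Partition // ∀ i : ℕ, P.parts.count i < p} =
      Nat.card {P : n.Partition // ∀ i ∈ P.parts, ¬ p ∣ i} := by
  classical
  have hp1 : 1 ≤ p := hp.one_lt.le
  set m := n + 1 with hm
  set A : Finset ℕ := Finset.Icc 1 m with hA
  set S : Finset ℕ := A.filter (fun i => ¬ p ∣ i) with hS
  -- part sizes are bounded
  have hbound : ∀ P : n.Partition, ∀ j ∈ P.parts, j ∈ A := by
    intro P j hj
    have h1 : 0 < j := P.parts_pos hj
    have h2 : j ≤ n := by
      simpa [P.parts_sum] using Multiset.single_le_sum (fun _ _ => Nat.zero_le _) _ hj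
    rw [hA, Finset.mem_Icc]
    omega
  -- the two counting statements
  have hreg : (#{P : n.Partition | ∀ i : ℕ, P.parts.count i < p} : ℚ) =
      coeff n (∏ i ∈ A, indicatorSeries ℚ ((· * i) '' {k | k < p})) := by
    rw [← partialGF_prop ℚ n A (fun i hi => (Finset.mem_Icc.1 hi).1) (fun _ => {k | k < p})
      (fun i _ => hp.pos)]
    norm_cast
    congr 1
    apply Finset.filter_congr
    intro P _
    simp only [Set.mem_setOf_eq]
    exact ⟨fun h => ⟨h, hbound P⟩, fun h => h.1⟩
  have hnd : (#{P : n.Partition | ∀ i ∈ P.parts, ¬ p ∣ i} : ℚ) =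
      coeff n (∏ i ∈ S, indicatorSeries ℚ ((· * i) '' Set.univ)) := by
    rw [← partialGF_prop ℚ n S
      (fun i hi => (Finset.mem_Icc.1 (Finset.mem_filter.1 hi).1).1) (fun _ => Set.univ)
      (fun _ _ => trivial)]
    norm_cast
    congr 1
    apply Finset.filter_congr
    intro P _
    simp only [Set.mem_univ, forall_const, true_and, hS, Finset.mem_filter]
    exact ⟨fun h j hj => ⟨hbound P j hj, h j hj⟩, fun h j hj => (h j hj).2⟩
  -- rewrite the indicator series
  have hposA : ∀ i ∈ A, 0 < i := fun i hi => (Finset.mem_Icc.1 hi).1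
  have hreg' : (∏ i ∈ A, indicatorSeries ℚ ((· * i) '' {k | k < p})) =
      ∏ i ∈ A, ((1 - (X : PowerSeries ℚ) ^ (p * i)) * (1 - (X : PowerSeries ℚ) ^ i)⁻¹) :=
    Finset.prod_congr rfl fun i hi => indicator_lt_eq (hposA i hi) p
  have hnd' : (∏ i ∈ S, indicatorSeries ℚ ((· * i) '' Set.univ)) =
      ∏ i ∈ S, (1 - (X : PowerSeries ℚ) ^ i)⁻¹ := by
    refine Finset.prod_congr rfl fun i hi => ?_
    have hi0 : 0 < i := hposA i (Finset.mem_filter.1 hi).1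
    rw [num_series_dvd hi0]
    have hset : (· * i) '' Set.univ = {k | i ∣ k} := by
      rw [Set.image_univ]
      ext k
      show (∃ x, x * i = k) ↔ i ∣ k
      exact ⟨fun ⟨x, hx⟩ => hx ▸ dvd_mul_left i x,
        fun ⟨x, hx⟩ => ⟨x, by rw [hx, mul_comm]⟩⟩
    rw [hset]
  -- the key generating function identity
  set E : Finset ℕ := (Finset.Ioc m (p * m)).filter (fun j => p ∣ j) with hE
  have key : (∏ i ∈ A, ((1 - (X : PowerSeries ℚ) ^ (p * i)) * (1 - (X : PowerSeries ℚ) ^ i)⁻¹)) =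
      (∏ i ∈ S, (1 - (X : PowerSeries ℚ) ^ i)⁻¹) *
        ∏ j ∈ E, (1 - (X : PowerSeries ℚ) ^ j) := by
    have himg : (Finset.Icc 1 (p * m)).filter (fun j => p ∣ j) = A.image (fun i => p * i) := by
      ext j
      simp only [Finset.mem_filter, Finset.mem_Icc, Finset.mem_image, hA]
      constructor
      · rintro ⟨⟨hj1, hj2⟩, i, rfl⟩
        refine ⟨i, ⟨Nat.pos_of_ne_zero fun h => by simp [h] at hj1,
          Nat.le_of_mul_le_mul_left hj2 hp.pos⟩, rfl⟩
      · rintro ⟨i, ⟨hi1, hi2⟩, rfl⟩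
        exact ⟨⟨Nat.mul_pos hp.pos hi1, Nat.mul_le_mul_left p hi2⟩, ⟨i, rfl⟩⟩
    have h1 : (∏ i ∈ A, (1 - (X : PowerSeries ℚ) ^ (p * i))) =
        ∏ j ∈ (Finset.Icc 1 (p * m)).filter (fun j => p ∣ j), (1 - (X : PowerSeries ℚ) ^ j) := by
      rw [himg, Finset.prod_image]
      intro x _ y _ h
      exact Nat.eq_of_mul_eq_mul_left hp.pos h
    have hmpm : m ≤ p * m := Nat.le_mul_of_pos_left m hp.pos
    have hsplit : Finset.Icc 1 (p * m) = Finset.Icc 1 m ∪ Finset.Ioc m (p * m) := by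
      ext x
      simp only [Finset.mem_Icc, Finset.mem_union, Finset.mem_Ioc]
      omega
    have hdisj : Disjoint ((Finset.Icc 1 m).filter (fun j => p ∣ j)) E := by
      rw [hE]
      refine Finset.disjoint_filter_filter ?_
      rw [Finset.disjoint_left]
      intro a ha hb
      have := (Finset.mem_Icc.1 ha).2
      have := (Finset.mem_Ioc.1 hb).1
      omega
    have h2 : (∏ j ∈ (Finset.Icc 1 (p * m)).filter (fun j => p ∣ j),
          (1 - (X : PowerSeries ℚ) ^ j)) =
        (∏ j ∈ A.filter (fun j => p ∣ j), (1 - (X : PowerSeries ℚ) ^ j)) *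
          ∏ j ∈ E, (1 - (X : PowerSeries ℚ) ^ j) := by
      rw [hsplit, Finset.filter_union, Finset.prod_union hdisj, hA, hE]
    have h3 : (∏ i ∈ A, (1 - (X : PowerSeries ℚ) ^ i)⁻¹) =
        (∏ i ∈ A.filter (fun j => p ∣ j), (1 - (X : PowerSeries ℚ) ^ i)⁻¹) *
          ∏ i ∈ S, (1 - (X : PowerSeries ℚ) ^ i)⁻¹ := by
      rw [hS, Finset.prod_filter_mul_prod_filter_not]
    have h4 : (∏ j ∈ A.filter (fun j => p ∣ j), (1 - (X : PowerSeries ℚ) ^ j)) *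
        ∏ i ∈ A.filter (fun j => p ∣ j), (1 - (X : PowerSeries ℚ) ^ i)⁻¹ = 1 := by
      rw [← Finset.prod_mul_distrib]
      rw [Finset.prod_congr rfl (fun i hi => ?_), Finset.prod_const_one]
      have hi0 : 0 < i := hposA i (Finset.mem_filter.1 hi).1
      apply PowerSeries.mul_inv_cancel
      simp [zero_pow hi0.ne']
    calc (∏ i ∈ A, ((1 - (X : PowerSeries ℚ) ^ (p * i)) * (1 - (X : PowerSeries ℚ) ^ i)⁻¹))
        = (∏ i ∈ A, (1 - (X : PowerSeries ℚ) ^ (p * i))) *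
            ∏ i ∈ A, (1 - (X : PowerSeries ℚ) ^ i)⁻¹ := Finset.prod_mul_distrib
      _ = ((∏ j ∈ A.filter (fun j => p ∣ j), (1 - (X : PowerSeries ℚ) ^ j)) *
            ∏ i ∈ A.filter (fun j => p ∣ j), (1 - (X : PowerSeries ℚ) ^ i)⁻¹) *
            ((∏ i ∈ S, (1 - (X : PowerSeries ℚ) ^ i)⁻¹) *
              ∏ j ∈ E, (1 - (X : PowerSeries ℚ) ^ j)) := by
          rw [h1, h2, h3]; ring
      _ = _ := by rw [h4, one_mul]
  -- compare coefficients
  have hcoeff : coeff n ((∏ i ∈ S, (1 - (X : PowerSeries ℚ) ^ i)⁻¹) *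
      ∏ j ∈ E, (1 - (X : PowerSeries ℚ) ^ j)) =
      coeff n (∏ i ∈ S, (1 - (X : PowerSeries ℚ) ^ i)⁻¹) := by
    apply coeff_mul_prod_one_sub_of_lt_order
    intro j hj
    rw [order_X_pow]
    have := (Finset.mem_Ioc.1 (Finset.mem_filter.1 hj).1).1
    exact_mod_cast by exact_mod_cast Nat.lt_of_lt_of_le (by omega) this.le
  have final : (#{P : n.Partition | ∀ i : ℕ, P.parts.count i < p} : ℚ) =
      (#{P : n.Partition | ∀ i ∈ P.parts, ¬ p ∣ i} : ℚ) := by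
    rw [hreg, hnd, hreg', hnd', key, hcoeff]
  have final' : #{P : n.Partition | ∀ i : ℕ, P.parts.count i < p} =
      #{P : n.Partition | ∀ i ∈ P.parts, ¬ p ∣ i} := by exact_mod_cast final
  rw [Nat.card_eq_fintype_card, Nat.card_eq_fintype_card, Fintype.card_subtype,
    Fintype.card_subtype]
  convert final' using 2
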